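/- Let H be a real Hilbert space and A, B ⊆ H × H relations whose SRGs contain no point at infinity. If Ā ⊆ ℂ is any set containing SRG(A) and satisfying the chord property (for each z ∈ Ā, the segment joining z and its complex conjugate z̄ lies in Ā), then SRG(A + B) ⊆ Ā + SRG(B) := { a + b : a ∈ Ā, b ∈ SRG(B) }, where A + B := {(u, y + z) : (u, y) ∈ A, (u, z) ∈ B}. -/

import Mathlib

/-!
**Statement 5** (SRG sum rule).  Let `A, B ⊆ H × H` be relations whose SRGs contain no
point at infinity.  If `Ā ⊆ ℂ` contains `SRG(A)` and satisfies the chord property, then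
`SRG(A + B) ⊆ Ā + SRG(B)` (pointwise sum of sets), where
`A + B := {(u, y + z) : (u, y) ∈ A, (u, z) ∈ B}`.
-/

open InnerProductGeometry OnePoint Pointwise

variable {H : Type*} [NormedAddCommGroup H] [InnerProductSpace ℝ H]

/-- The finite part of the Scaled Relative Graph of a relation `R ⊆ H × H`. -/
noncomputable def srg (R : Set (H × H)) : Set ℂ :=
  {w | ∃ u₁ y₁ u₂ y₂, (u₁, y₁) ∈ R ∧ (u₂, y₂) ∈ R ∧ u₁ ≠ u₂ ∧
    (w = (‖y₁ - y₂‖ / ‖u₁ - u₂‖ : ℝ) *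
        Complex.exp (Complex.I * (angle (u₁ - u₂) (y₁ - y₂) : ℝ)) ∨
     w = (‖y₁ - y₂‖ / ‖u₁ - u₂‖ : ℝ) *
        Complex.exp (-(Complex.I * (angle (u₁ - u₂) (y₁ - y₂) : ℝ))))}

/-- The Scaled Relative Graph of a relation in the extended complex plane. -/
noncomputable def srgE (R : Set (H × H)) : Set (OnePoint ℂ) :=
  (fun z : ℂ => (z : OnePoint ℂ)) '' srg R ∪
    {w | w = (∞ : OnePoint ℂ) ∧ ∃ u y₁ y₂, (u, y₁) ∈ R ∧ (u, y₂) ∈ R ∧ y₁ ≠ y₂}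

/-- Relational sum: `R + S = {(u, y + z) : (u, y) ∈ R, (u, z) ∈ S}`. -/
def relAdd (R S : Set (H × H)) : Set (H × H) :=
  {p | ∃ y z, (p.1, y) ∈ R ∧ (p.1, z) ∈ S ∧ p.2 = y + z}

/-- A set `G ⊆ ℂ` satisfies the chord property if for each `z ∈ G` the segment between
`z` and its conjugate lies in `G`. -/
def ChordProperty (G : Set ℂ) : Prop :=
  ∀ z ∈ G, ∀ l ∈ Set.Icc (0 : ℝ) 1,
    (l : ℂ) * z + (1 - (l : ℂ)) * (starRingEnd ℂ) z ∈ G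

section Aux

open RealInnerProductSpace

lemma srg_cos_part (U Y : H) (hU : U ≠ 0) :
    ‖Y‖ / ‖U‖ * Real.cos (angle U Y) = ⟪U, Y⟫ / ‖U‖ ^ 2 := by
  rw [cos_angle]
  by_cases hY : Y = 0
  · simp [hY]
  · have h1 : ‖U‖ ≠ 0 := norm_ne_zero_iff.mpr hU
    have h2 : ‖Y‖ ≠ 0 := norm_ne_zero_iff.mpr hY
    field_simp

lemma srg_sin_part (U Y : H) (hU : U ≠ 0) :
    ‖Y‖ / ‖U‖ * Real.sin (angle U Y) = ‖Y - (⟪U, Y⟫ / ‖U‖ ^ 2) • U‖ / ‖U‖ := by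
  have h1 : ‖U‖ ≠ 0 := norm_ne_zero_iff.mpr hU
  have hs : 0 ≤ Real.sin (angle U Y) :=
    Real.sin_nonneg_of_nonneg_of_le_pi (angle_nonneg _ _) (angle_le_pi _ _)
  have lhsnn : 0 ≤ ‖Y‖ / ‖U‖ * Real.sin (angle U Y) :=
    mul_nonneg (by positivity) hs
  have rhsnn : (0:ℝ) ≤ ‖Y - (⟪U, Y⟫ / ‖U‖ ^ 2) • U‖ / ‖U‖ := by positivity
  have hsq : (‖Y‖ / ‖U‖ * Real.sin (angle U Y)) ^ 2 =
      (‖Y - (⟪U, Y⟫ / ‖U‖ ^ 2) • U‖ / ‖U‖) ^ 2 := by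
    have hcos := srg_cos_part U Y hU
    have hsin2 : Real.sin (angle U Y) ^ 2 = 1 - Real.cos (angle U Y) ^ 2 :=
      Real.sin_sq (angle U Y)
    have hexp : ‖Y - (⟪U, Y⟫ / ‖U‖ ^ 2) • U‖ ^ 2 =
        ‖Y‖ ^ 2 - 2 * (⟪U, Y⟫ / ‖U‖ ^ 2) * ⟪U, Y⟫ + (⟪U, Y⟫ / ‖U‖ ^ 2) ^ 2 * ‖U‖ ^ 2 := by
      rw [norm_sub_sq_real, real_inner_smul_right, real_inner_comm Y U, norm_smul,
        Real.norm_eq_abs, mul_pow, sq_abs]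
      ring
    have hc2 : (‖Y‖ / ‖U‖) ^ 2 * Real.cos (angle U Y) ^ 2 = (⟪U, Y⟫ / ‖U‖ ^ 2) ^ 2 := by
      rw [← mul_pow, hcos]
    rw [mul_pow, hsin2, mul_sub, mul_one, hc2,
      div_pow (‖Y - (⟪U, Y⟫ / ‖U‖ ^ 2) • U‖) (‖U‖) 2, hexp]
    field_simp
    ring
  nlinarith [hsq, lhsnn, rhsnn]

lemma srg_repr (U Y : H) (hU : U ≠ 0) :
    ((‖Y‖ / ‖U‖ : ℝ) : ℂ) * Complex.exp (Complex.I * ((angle U Y : ℝ) : ℂ)) =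
      ((⟪U, Y⟫ / ‖U‖ ^ 2 : ℝ) : ℂ) +
        ((‖Y - (⟪U, Y⟫ / ‖U‖ ^ 2) • U‖ / ‖U‖ : ℝ) : ℂ) * Complex.I := by
  rw [mul_comm Complex.I, Complex.exp_mul_I, ← Complex.ofReal_cos, ← Complex.ofReal_sin,
    mul_add, ← mul_assoc, ← Complex.ofReal_mul, ← Complex.ofReal_mul,
    srg_cos_part U Y hU, srg_sin_part U Y hU]

lemma srg_repr_neg (U Y : H) (hU : U ≠ 0) :
    ((‖Y‖ / ‖U‖ : ℝ) : ℂ) * Complex.exp (-(Complex.I * ((angle U Y : ℝ) : ℂ))) =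
      ((⟪U, Y⟫ / ‖U‖ ^ 2 : ℝ) : ℂ) -
        ((‖Y - (⟪U, Y⟫ / ‖U‖ ^ 2) • U‖ / ‖U‖ : ℝ) : ℂ) * Complex.I := by
  have h : Complex.exp (-(Complex.I * ((angle U Y : ℝ) : ℂ))) =
      (starRingEnd ℂ) (Complex.exp (Complex.I * ((angle U Y : ℝ) : ℂ))) := by
    rw [← Complex.exp_conj, map_mul, Complex.conj_I, Complex.conj_ofReal, neg_mul]
  rw [h, ← Complex.conj_ofReal ((‖Y‖ / ‖U‖ : ℝ)), ← map_mul, srg_repr U Y hU]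
  simp [map_add, map_mul, Complex.conj_ofReal, Complex.conj_I, sub_eq_add_neg, mul_comm]

lemma chord_mem {Abar : Set ℂ} (hchord : ChordProperty Abar) {a b t : ℝ}
    (hz : (a : ℂ) + (b : ℂ) * Complex.I ∈ Abar) (ht : |t| ≤ b) :
    (a : ℂ) + (t : ℂ) * Complex.I ∈ Abar := by
  have hb0 : 0 ≤ b := le_trans (abs_nonneg t) ht
  by_cases hb : b = 0
  · have ht0 : t = 0 := abs_nonpos_iff.mp (hb ▸ ht)
    simpa [ht0, hb] using hz
  · have hbpos : 0 < b := lt_of_le_of_ne hb0 (Ne.symm hb)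
    set l : ℝ := (t + b) / (2 * b) with hl
    have hmem : l ∈ Set.Icc (0:ℝ) 1 := by
      constructor
      · apply div_nonneg _ (by linarith)
        linarith [ht, neg_abs_le t]
      · rw [div_le_one (by linarith)]
        linarith [le_abs_self t, ht]
    have h := hchord _ hz l hmem
    have hconj : (starRingEnd ℂ) ((a : ℂ) + (b : ℂ) * Complex.I) =
        (a : ℂ) - (b : ℂ) * Complex.I := by
      simp [map_add, map_mul, Complex.conj_ofReal, Complex.conj_I, sub_eq_add_neg, mul_comm]
    rw [hconj] at h
    have key : ((l : ℝ) : ℂ) * ((a : ℂ) + (b : ℂ) * Complex.I) +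
        (1 - ((l : ℝ) : ℂ)) * ((a : ℂ) - (b : ℂ) * Complex.I) =
        (a : ℂ) + (((2 * l - 1) * b : ℝ) : ℂ) * Complex.I := by
      push_cast; ring
    have htl : (2 * l - 1) * b = t := by
      have h2 : l * (2 * b) = t + b := by
        rw [hl]; exact div_mul_cancel₀ _ (mul_pos two_pos hbpos).ne'
      linarith
    rw [key, htl] at h
    exact h

end Aux

open RealInnerProductSpace

theorem srg_sum_rule (A B : Set (H × H))
    (hA : (∞ : OnePoint ℂ) ∉ srgE A) (hB : (∞ : OnePoint ℂ) ∉ srgE B)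
    (Abar : Set ℂ) (hAbar : srg A ⊆ Abar) (hchord : ChordProperty Abar) :
    srg (relAdd A B) ⊆ Abar + srg B := by
  intro w hw
  obtain ⟨u₁, p₁, u₂, p₂, hp₁, hp₂, huu, hwe⟩ := hw
  obtain ⟨y₁, z₁, hy₁, hz₁, hp1⟩ := hp₁
  obtain ⟨y₂, z₂, hy₂, hz₂, hp2⟩ := hp₂
  have hp1' : p₁ = y₁ + z₁ := hp1
  have hp2' : p₂ = y₂ + z₂ := hp2
  subst hp1'; subst hp2'
  set U : H := u₁ - u₂ with hU
  have hUne : U ≠ 0 := sub_ne_zero.mpr huu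
  have hUnorm : (0:ℝ) < ‖U‖ := norm_pos_iff.mpr hUne
  set Ya : H := y₁ - y₂ with hYa
  set Yb : H := z₁ - z₂ with hYb
  have hYsum : (y₁ + z₁) - (y₂ + z₂) = Ya + Yb := by rw [hYa, hYb]; abel
  set aA : ℝ := ⟪U, Ya⟫ / ‖U‖ ^ 2 with haA
  set aB : ℝ := ⟪U, Yb⟫ / ‖U‖ ^ 2 with haB
  set bA : ℝ := ‖Ya - aA • U‖ / ‖U‖ with hbA
  set bB : ℝ := ‖Yb - aB • U‖ / ‖U‖ with hbB
  have haS : ⟪U, Ya + Yb⟫ / ‖U‖ ^ 2 = aA + aB := by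
    rw [inner_add_right, haA, haB, add_div]
  set bS : ℝ := ‖(Ya + Yb) - (aA + aB) • U‖ / ‖U‖ with hbS
  have hdecomp : (Ya + Yb) - (aA + aB) • U = (Ya - aA • U) + (Yb - aB • U) := by
    rw [add_smul]; abel
  have htb : |bS - bB| ≤ bA := by
    have h1 := abs_norm_sub_norm_le ((Ya - aA • U) + (Yb - aB • U)) (Yb - aB • U)
    rw [add_sub_cancel_right] at h1
    have h2 : bS - bB = (‖(Ya + Yb) - (aA + aB) • U‖ - ‖Yb - aB • U‖) / ‖U‖ := by
      rw [hbS, hbB, sub_div]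
    rw [h2, abs_div, abs_of_nonneg (norm_nonneg U), hdecomp, hbA]
    gcongr
  have memA : ((aA : ℂ) + (bA : ℂ) * Complex.I) ∈ srg A :=
    ⟨u₁, y₁, u₂, y₂, hy₁, hy₂, huu, Or.inl (srg_repr U Ya hUne).symm⟩
  have memBp : ((aB : ℂ) + (bB : ℂ) * Complex.I) ∈ srg B :=
    ⟨u₁, z₁, u₂, z₂, hz₁, hz₂, huu, Or.inl (srg_repr U Yb hUne).symm⟩
  have memBm : ((aB : ℂ) - (bB : ℂ) * Complex.I) ∈ srg B :=
    ⟨u₁, z₁, u₂, z₂, hz₁, hz₂, huu, Or.inr (srg_repr_neg U Yb hUne).symm⟩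
  rw [Set.mem_add]
  rcases hwe with hwe | hwe
  · rw [hYsum, srg_repr U (Ya + Yb) hUne, haS, ← hbS] at hwe
    refine ⟨(aA : ℂ) + ((bS - bB : ℝ) : ℂ) * Complex.I,
      chord_mem hchord (hAbar memA) htb,
      (aB : ℂ) + (bB : ℂ) * Complex.I, memBp, ?_⟩
    rw [hwe]
    push_cast
    ring
  · rw [hYsum, srg_repr_neg U (Ya + Yb) hUne, haS, ← hbS] at hwe
    have htb' : |-(bS - bB)| ≤ bA := by rwa [abs_neg]
    refine ⟨(aA : ℂ) + ((-(bS - bB) : ℝ) : ℂ) * Complex.I,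
      chord_mem hchord (hAbar memA) htb',
      (aB : ℂ) - (bB : ℂ) * Complex.I, memBm, ?_⟩
    rw [hwe]
    push_cast
    ring
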